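/- arXiv:1306.0377 — 2 statements merged into one kernel-verified Lean document; each statement's English description precedes it below -/
import Mathlib

section
/- Let X be a set with a parent relation whose ancestor relation is well-founded, and suppose there is a constant c ≥ 1 such that for every P ∈ X, every descendant-free subset of anc(P) has at most c elements. Then for any finite sets U ⊆ V ⊆ X, #free(U) ≤ c · #free(V), where free(S) = {P ∈ S : desc(P) ∩ S = ∅}. -/
/-- If every descendant-free subset of any ancestor set `anc(P)` has at most `c ≥ 1`
elements, then for finite sets `U ⊆ V`, `#free(U) ≤ c · #free(V)`, where
`free(S) = {P ∈ S : desc(P) ∩ S = ∅}`. -/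
theorem stmt_9 {X : Type*} (parent : X → X → Prop)
    (hwf : WellFounded (Relation.TransGen parent))
    (c : ℕ) (hc : 1 ≤ c)
    (hbound : ∀ (P : X) (S : Set X), S ⊆ {Q | Relation.TransGen parent Q P} →
      (∀ p ∈ S, ∀ q ∈ S, ¬ Relation.TransGen parent p q) → S.ncard ≤ c)
    (U V : Set X) (hUV : U ⊆ V) (hV : V.Finite) :
    {p ∈ U | ∀ q, Relation.TransGen parent p q → q ∉ U}.ncard
      ≤ c * {p ∈ V | ∀ q, Relation.TransGen parent p q → q ∉ V}.ncard := by
  classical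
  set R := Relation.TransGen parent with hR
  have hIrr : ∀ a : X, ¬ R a a := fun a => (hwf.isIrrefl).irrefl a
  -- every element of V has a descendant-or-self in free(V)
  have key : ∀ p ∈ V, ∃ v, (v ∈ V ∧ ∀ q, R v q → q ∉ V) ∧ (p = v ∨ R p v) := by
    intro p hp
    set T : Set X := {q | q ∈ V ∧ (p = q ∨ R p q)} with hT
    have hTfin : T.Finite := hV.subset (fun q hq => hq.1)
    haveI : Finite ↥T := hTfin.to_subtype
    let r : ↥T → ↥T → Prop := fun a b => R b.1 a.1
    haveI : IsTrans ↥T r := ⟨fun a b c h1 h2 => Relation.TransGen.trans h2 h1⟩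
    haveI : IsIrrefl ↥T r := ⟨fun a h => hIrr a.1 h⟩
    have hwf' : WellFounded r := Finite.wellFounded_of_trans_of_irrefl r
    obtain ⟨v, -, hmin⟩ := hwf'.has_min Set.univ ⟨⟨p, hp, Or.inl rfl⟩, trivial⟩
    refine ⟨v.1, ⟨v.2.1, ?_⟩, v.2.2⟩
    intro q hq hqV
    have hqT : q ∈ T := by
      refine ⟨hqV, Or.inr ?_⟩
      rcases v.2.2 with h | h
      · rw [h]; exact hq
      · exact h.trans hq
    exact hmin ⟨q, hqT⟩ trivial hq
  set FU := {p ∈ U | ∀ q, R p q → q ∉ U} with hFU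
  set FV := {p ∈ V | ∀ q, R p q → q ∉ V} with hFV
  have hFUfin : FU.Finite := (hV.subset hUV).subset (fun p hp => hp.1)
  have hFVfin : FV.Finite := hV.subset (fun p hp => hp.1)
  let f : X → X := fun p => if h : ∃ v, v ∈ FV ∧ (p = v ∨ R p v) then h.choose else p
  have hf : ∀ p ∈ FU, f p ∈ FV ∧ (p = f p ∨ R p (f p)) := by
    intro p hp
    obtain ⟨v, hv1, hv2⟩ := key p (hUV hp.1)
    have h : ∃ v, v ∈ FV ∧ (p = v ∨ R p v) := ⟨v, hv1, hv2⟩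
    simp only [f, dif_pos h]
    exact ⟨h.choose_spec.1, h.choose_spec.2⟩
  set A := hFUfin.toFinset with hA
  set B := hFVfin.toFinset with hB
  have hcard : A.card ≤ c * (A.image f).card := by
    apply Finset.card_le_mul_card_image
    intro v hv
    set fib := A.filter (fun x => f x = v) with hfib
    obtain ⟨p₀, hp₀, hfp₀⟩ := Finset.mem_image.mp hv
    have hp₀FU : p₀ ∈ FU := hFUfin.mem_toFinset.mp hp₀
    have hvFV : v ∈ FV := hfp₀ ▸ (hf p₀ hp₀FU).1
    by_cases hvfib : v ∈ fib
    · have hsub : fib ⊆ {v} := by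
        intro x hx
        rw [Finset.mem_singleton]
        by_contra hne
        obtain ⟨hxA, hfx⟩ := Finset.mem_filter.mp hx
        have hxFU : x ∈ FU := hFUfin.mem_toFinset.mp hxA
        have h2 := (hf x hxFU).2
        rw [hfx] at h2
        rcases h2 with h | h
        · exact hne h
        · have hvFU : v ∈ FU := hFUfin.mem_toFinset.mp (Finset.mem_filter.mp hvfib).1
          exact hxFU.2 v h hvFU.1
      calc fib.card ≤ ({v} : Finset X).card := Finset.card_le_card hsub
        _ = 1 := Finset.card_singleton v
        _ ≤ c := hc
    · have hS : (fib : Set X).ncard ≤ c := by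
        apply hbound v
        · intro x hx
          rw [Finset.mem_coe, Finset.mem_filter] at hx
          obtain ⟨hxA, hfx⟩ := hx
          have hxFU : x ∈ FU := hFUfin.mem_toFinset.mp hxA
          have h2 := (hf x hxFU).2
          rw [hfx] at h2
          rcases h2 with h | h
          · rw [h] at hxA hfx
            exact absurd (show v ∈ fib from Finset.mem_filter.mpr ⟨hxA, hfx⟩) hvfib
          · exact h
        · intro x hx y hy hxy
          rw [Finset.mem_coe, Finset.mem_filter] at hx hy
          have hxFU : x ∈ FU := hFUfin.mem_toFinset.mp hx.1
          have hyFU : y ∈ FU := hFUfin.mem_toFinset.mp hy.1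
          exact hxFU.2 y hxy hyFU.1
      rwa [Set.ncard_coe_finset] at hS
  have himg : A.image f ⊆ B := by
    intro v hv
    obtain ⟨p, hp, hfp⟩ := Finset.mem_image.mp hv
    exact hFVfin.mem_toFinset.mpr (hfp ▸ (hf p (hFUfin.mem_toFinset.mp hp)).1)
  have : FU.ncard ≤ c * FV.ncard := by
    rw [Set.ncard_eq_toFinset_card FU hFUfin, Set.ncard_eq_toFinset_card FV hFVfin]
    calc A.card ≤ c * (A.image f).card := hcard
      _ ≤ c * B.card := Nat.mul_le_mul_left c (Finset.card_le_card himg)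
  exact this
end

section
/- Let E : S → ℝ_{≥0} be a nonnegative function on a finite set S, and let R : S → Finset S assign to each s the set R(s) ⊆ S of elements that must be refined together with s. Define Ē² := max_{s∈S} Σ_{t∈R(s)} E(t)². Run the following greedy procedure with parameter μ ∈ (0,1]: iterate over S; maintain M, M̃ (initially empty) and a candidate set C (initially S); when selecting s ∈ C, if Σ_{t ∈ R(s)\M̃} E(t)² ≥ μ Ē², add s to M and R(s) to M̃; in either case remove R(s) from C. Then upon termination M ≠ ∅ and Σ_{t∈M̃} E(t)² ≥ μ (#M) Ē², provided Ē² > 0 and R(s') ⊆ R(s) for all s' ∈ R(s). -/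
/-- Abstract modified maximum marking strategy (Proposition 5.2): iterating the greedy
procedure over an enumeration `l` of the finite set `S` with accumulated indicators
`Σ_{t∈R(s)} E(t)²`, maximal value `Ebar2 > 0` and parameter `μ ∈ (0,1]`, the resulting
set of marked elements `M = res.1` is nonempty and the accumulated set `M̃ = res.2.1`
satisfies `Σ_{t∈M̃} E(t)² ≥ μ #M Ebar2`, provided `s ∈ R s` and `R` is hereditary. -/
theorem stmt_15 {S : Type*} [Fintype S] [DecidableEq S] [Nonempty S]
    (E : S → ℝ) (hE : ∀ s, 0 ≤ E s)
    (R : S → Finset S) (hself : ∀ s, s ∈ R s)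
    (hhered : ∀ s, ∀ s' ∈ R s, R s' ⊆ R s)
    (μ : ℝ) (hμ0 : 0 < μ) (hμ1 : μ ≤ 1)
    (Ebar2 : ℝ)
    (hEbar : Ebar2 = Finset.univ.sup' Finset.univ_nonempty (fun s => ∑ t ∈ R s, (E t) ^ 2))
    (hEpos : 0 < Ebar2)
    (step : Finset S × Finset S × Finset S → S → Finset S × Finset S × Finset S)
    (hstep : ∀ (M Mt C : Finset S) (s : S), step (M, Mt, C) s =
      if s ∈ C then
        (if μ * Ebar2 ≤ ∑ t ∈ R s \ Mt, (E t) ^ 2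
          then (insert s M, Mt ∪ R s, C \ R s)
          else (M, Mt, C \ R s))
      else (M, Mt, C))
    (l : List S) (hl : l.Nodup) (hlall : ∀ s, s ∈ l)
    (res : Finset S × Finset S × Finset S)
    (hres : res = l.foldl step (∅, ∅, Finset.univ)) :
    res.1 ≠ ∅ ∧ μ * res.1.card * Ebar2 ≤ ∑ t ∈ res.2.1, (E t) ^ 2 := by
  obtain ⟨sstar, -, hsstar⟩ := Finset.exists_mem_eq_sup' Finset.univ_nonempty
    (fun s => ∑ t ∈ R s, (E t) ^ 2)
  have hEs : Ebar2 = ∑ t ∈ R sstar, (E t) ^ 2 := by rw [hEbar, hsstar]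
  set Inv : Finset S × Finset S × Finset S → Prop :=
    fun st => (μ * st.1.card * Ebar2 ≤ ∑ t ∈ st.2.1, (E t) ^ 2) ∧
      (st.1 = ∅ → st.2.1 = ∅ ∧ sstar ∈ st.2.2) with hInv
  have hstep1 : ∀ st s, Inv st →
      Inv (step st s) ∧ (step st s).2.2 ⊆ st.2.2 ∧ s ∉ (step st s).2.2 := by
    rintro ⟨M, Mt, C⟩ s ⟨h1, h2⟩
    rw [hstep]
    by_cases hsC : s ∈ C
    · rw [if_pos hsC]
      by_cases htest : μ * Ebar2 ≤ ∑ t ∈ R s \ Mt, (E t) ^ 2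
      · rw [if_pos htest]
        refine ⟨⟨?_, by simp⟩, Finset.sdiff_subset, by simp [hself s]⟩
        have hcard : ((insert s M).card : ℝ) ≤ (M.card : ℝ) + 1 := by
          exact_mod_cast Finset.card_insert_le s M
        have hsum : ∑ t ∈ Mt ∪ R s, (E t) ^ 2
            = ∑ t ∈ Mt, (E t) ^ 2 + ∑ t ∈ R s \ Mt, (E t) ^ 2 := by
          rw [← Finset.union_sdiff_self_eq_union, Finset.sum_union Finset.disjoint_sdiff]
        have := mul_le_mul_of_nonneg_right
          (mul_le_mul_of_nonneg_left hcard hμ0.le) hEpos.le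
        simp only
        nlinarith
      · rw [if_neg htest]
        refine ⟨⟨h1, ?_⟩, Finset.sdiff_subset, by simp [hself s]⟩
        intro hM
        obtain ⟨hMt, hsC'⟩ := h2 hM
        refine ⟨hMt, Finset.mem_sdiff.mpr ⟨hsC', fun hmem => htest ?_⟩⟩
        subst hMt
        have hsub : ∑ t ∈ R sstar, (E t) ^ 2 ≤ ∑ t ∈ R s, (E t) ^ 2 :=
          Finset.sum_le_sum_of_subset_of_nonneg (hhered s sstar hmem)
            (fun t _ _ => sq_nonneg _)
        simp only [Finset.sdiff_empty]
        nlinarith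
    · rw [if_neg hsC]
      exact ⟨⟨h1, h2⟩, subset_rfl, hsC⟩
  have hfold : ∀ (l : List S) st, Inv st → Inv (l.foldl step st) ∧
      ((l.foldl step st).2.2 ⊆ st.2.2) ∧
      (sstar ∈ l → sstar ∉ (l.foldl step st).2.2) := by
    intro l
    induction l with
    | nil => exact fun st h => ⟨h, subset_rfl, by simp⟩
    | cons a tl ih =>
      intro st h
      obtain ⟨h1, h2, h3⟩ := hstep1 st a h
      obtain ⟨g1, g2, g3⟩ := ih _ h1
      refine ⟨g1, g2.trans h2, fun hmem => ?_⟩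
      rcases List.mem_cons.mp hmem with rfl | hmem
      · exact fun hc => h3 (g2 hc)
      · exact g3 hmem
  have hinit : Inv (∅, ∅, Finset.univ) := by
    constructor
    · simp
    · intro _; exact ⟨rfl, Finset.mem_univ _⟩
  obtain ⟨⟨i1, i2⟩, -, i3⟩ := hfold l _ hinit
  rw [← hres] at i1 i2 i3
  exact ⟨fun h => (i3 (hlall sstar)) (i2 h).2, i1⟩
end
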